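/- For any two qubit density matrices ρ, σ (2×2 positive semidefinite, trace 1), the trace norm of their difference equals twice the Hilbert–Schmidt-expressible quantity: ‖ρ−σ‖₁ = 2√(|ρ₀₀−σ₀₀|² + |ρ₀₁−σ₀₁|²). In particular, for single-qubit states the trace-norm coherence min_{σ diagonal}‖ρ−σ‖₁ coincides with the ℓ₁-norm of coherence 2|ρ₀₁|. -/

import Mathlib

open Matrix
open scoped ComplexOrder

/-- The trace norm ‖M‖₁ = Tr√(M†M). -/
noncomputable def traceNorm {n : Type*} [Fintype n] [DecidableEq n]
    (M : Matrix n n ℂ) : ℝ :=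
  (((Matrix.posSemidef_conjTranspose_mul_self M).1.eigenvectorUnitary : Matrix n n ℂ) *
    diagonal (((↑) : ℝ → ℂ) ∘ Real.sqrt ∘ (Matrix.posSemidef_conjTranspose_mul_self M).1.eigenvalues) *
    (star (Matrix.posSemidef_conjTranspose_mul_self M).1.eigenvectorUnitary : Matrix n n ℂ)).trace.re

/-- A density matrix: positive semidefinite with unit trace. -/
def IsDensity {n : Type*} [Fintype n] (ρ : Matrix n n ℂ) : Prop :=
  ρ.PosSemidef ∧ ρ.trace = 1

lemma key (M : Matrix (Fin 2) (Fin 2) ℂ) (hM : M.IsHermitian) (ht : M.trace = 0) :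
    traceNorm M = 2 * Real.sqrt ((‖M 0 0‖) ^ 2 + (‖M 0 1‖) ^ 2) := by
  set r : ℝ := (‖M 0 0‖) ^ 2 + (‖M 0 1‖) ^ 2 with hr
  have hr0 : 0 ≤ r := by positivity
  have h00 : star (M 0 0) = M 0 0 := by
    conv_rhs => rw [← hM]
    simp [conjTranspose_apply]
  have h10 : M 1 0 = star (M 0 1) := by
    conv_lhs => rw [← hM]
    simp [conjTranspose_apply]
  have h11 : M 1 1 = - M 0 0 := by
    have : M 0 0 + M 1 1 = 0 := by simpa [Matrix.trace, Fin.sum_univ_two] using ht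
    linear_combination this
  have habs : ∀ z : ℂ, z * (starRingEnd ℂ) z = ((‖z‖ : ℝ) : ℂ) ^ 2 := fun z => by
    rw [Complex.mul_conj, ← Complex.ofReal_pow, Complex.sq_norm]
  have e00 : M 0 0 * M 0 0 = ((‖M 0 0‖ : ℝ) : ℂ) ^ 2 := by
    nth_rewrite 2 [← h00]
    rw [Complex.star_def, habs]
  have hMM : Mᴴ * M = (r : ℂ) • (1 : Matrix (Fin 2) (Fin 2) ℂ) := by
    rw [hM]
    ext i j
    fin_cases i <;> fin_cases j <;>
      simp [Matrix.mul_apply, Fin.sum_univ_two, h10, h11, Matrix.one_apply, hr]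
    · rw [e00, habs]
    · ring
    · ring
    · rw [mul_comm ((starRingEnd ℂ) (M 0 1)), habs, e00]
      ring
  have hsq : ((Real.sqrt r : ℂ) • (1 : Matrix (Fin 2) (Fin 2) ℂ)) ^ 2 = Mᴴ * M := by
    rw [hMM, smul_pow, one_pow]
    congr 1
    rw [← Complex.ofReal_pow, Real.sq_sqrt hr0]
  have hps : Matrix.PosSemidef ((Real.sqrt r : ℂ) • (1 : Matrix (Fin 2) (Fin 2) ℂ)) := by
    have : ((Real.sqrt r : ℂ) • (1 : Matrix (Fin 2) (Fin 2) ℂ)) =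
        Matrix.diagonal (fun _ => (Real.sqrt r : ℂ)) := by
      ext i j; rcases eq_or_ne i j with h | h <;> simp [Matrix.one_apply, h]
    rw [this]
    refine Matrix.posSemidef_diagonal_iff.mpr fun i => ?_
    simp [Complex.zero_le_real, Real.sqrt_nonneg]
  have hdiag := (Matrix.posSemidef_conjTranspose_mul_self M).1.conjStarAlgAut_star_eigenvectorUnitary
  have hev : ∀ i, (Matrix.posSemidef_conjTranspose_mul_self M).1.eigenvalues i = r := by
    intro i
    have h2 := hdiag.symm.trans (congrArg (fun X => Unitary.conjStarAlgAut ℂ _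
      (star (Matrix.posSemidef_conjTranspose_mul_self M).1.eigenvectorUnitary) X) hMM)
    have h3 := congrFun (congrFun h2 i) i
    simp [map_smul] at h3
    exact_mod_cast h3
  rw [traceNorm, Matrix.trace_mul_cycle, Unitary.coe_star_mul_self, one_mul]
  simp [Matrix.trace, Fin.sum_univ_two, hev]

lemma diag_nonneg {ρ : Matrix (Fin 2) (Fin 2) ℂ} (h : ρ.PosSemidef) (i : Fin 2) :
    0 ≤ ρ i i := by
  exact h.diag_nonneg

/-- For qubit density matrices ρ, σ, ‖ρ−σ‖₁ = 2√(|ρ₀₀−σ₀₀|²+|ρ₀₁−σ₀₁|²); in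
particular the trace-norm coherence (minimal trace distance to diagonal states)
coincides with the ℓ₁-norm of coherence 2|ρ₀₁|. -/
theorem stmt_16 (ρ σ : Matrix (Fin 2) (Fin 2) ℂ)
    (hρ : IsDensity ρ) (hσ : IsDensity σ) :
    traceNorm (ρ - σ) =
      2 * Real.sqrt ((‖ρ 0 0 - σ 0 0‖) ^ 2 +
        (‖ρ 0 1 - σ 0 1‖) ^ 2) ∧
    IsLeast {x : ℝ | ∃ τ : Matrix (Fin 2) (Fin 2) ℂ,
        IsDensity τ ∧ τ.IsDiag ∧ x = traceNorm (ρ - τ)}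
      (2 * ‖ρ 0 1‖) := by
  have main : ∀ τ : Matrix (Fin 2) (Fin 2) ℂ, IsDensity τ →
      traceNorm (ρ - τ) = 2 * Real.sqrt ((‖ρ 0 0 - τ 0 0‖) ^ 2 +
        (‖ρ 0 1 - τ 0 1‖) ^ 2) := by
    intro τ hτ
    have := key (ρ - τ) (hρ.1.1.sub hτ.1.1) (by rw [Matrix.trace_sub, hρ.2, hτ.2, sub_self])
    simpa [Matrix.sub_apply] using this
  refine ⟨main σ hσ, ⟨?_, ?_⟩⟩
  · refine ⟨Matrix.diagonal (fun i => ρ i i), ⟨?_, ?_⟩, Matrix.isDiag_diagonal _, ?_⟩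
    · exact Matrix.posSemidef_diagonal_iff.mpr fun i => diag_nonneg hρ.1 i
    · simpa [Matrix.trace_diagonal, Matrix.trace, Matrix.diag] using hρ.2
    · rw [main _ ⟨Matrix.posSemidef_diagonal_iff.mpr fun i => diag_nonneg hρ.1 i,
        by simpa [Matrix.trace_diagonal, Matrix.trace, Matrix.diag] using hρ.2⟩]
      simp [Matrix.diagonal_apply, Real.sqrt_sq_eq_abs]
  · rintro x ⟨τ, hτ, hdiag, rfl⟩
    rw [main τ hτ]
    have h01 : τ 0 1 = 0 := hdiag (by decide)
    rw [h01, sub_zero]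
    have : ‖ρ 0 1‖ = Real.sqrt ((‖ρ 0 1‖) ^ 2) := by
      rw [Real.sqrt_sq (norm_nonneg _)]
    nth_rewrite 1 [this]
    have := Real.sqrt_le_sqrt (show (‖ρ 0 1‖) ^ 2 ≤
      (‖ρ 0 0 - τ 0 0‖) ^ 2 + (‖ρ 0 1‖) ^ 2 by nlinarith [sq_nonneg (‖ρ 0 0 - τ 0 0‖)])
    linarith
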